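/- Let G = (V,E,w) be strongly connected with diameter d and max edge weight magnitude w_max. Then the optimal value of the penalized problem min_{P ∈ Δ_E} ⟨P,W⟩ + 3 d w_max ‖P𝟏 - Pᵀ𝟏‖₁ equals μ(G), the min-mean-cycle value of G (i.e., the penalty formulation is exact). -/

import Mathlib

open Finset

/-- A directed cycle: a nonempty list of distinct vertices whose consecutive
pairs (cyclically) are edges of `E`. -/
def IsCycle {n : ℕ} (E : Finset (Fin n × Fin n)) (c : List (Fin n)) : Prop :=
  c ≠ [] ∧ c.Nodup ∧ ∀ p ∈ c.zip (c.rotate 1), p ∈ E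

/-- Mean weight of a cycle. -/
noncomputable def meanWeight {n : ℕ} (w : Fin n × Fin n → ℝ) (c : List (Fin n)) : ℝ :=
  ((c.zip (c.rotate 1)).map w).sum / c.length

/-- Min-mean-cycle value of the digraph `(V, E, w)`. -/
noncomputable def mmc {n : ℕ} (E : Finset (Fin n × Fin n)) (w : Fin n × Fin n → ℝ) : ℝ :=
  sInf {x : ℝ | ∃ c, IsCycle E c ∧ meanWeight w c = x}

/-- Membership in `Δ_E`: a nonnegative matrix supported on `E` with total sum 1. -/
def InDeltaE {n : ℕ} (E : Finset (Fin n × Fin n)) (P : Matrix (Fin n) (Fin n) ℝ) : Prop :=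
  (∀ i j, 0 ≤ P i j) ∧ (∀ i j, (i, j) ∉ E → P i j = 0) ∧ (∑ i, ∑ j, P i j) = 1

/-- A circulation: netflow is balanced at every vertex. -/
def IsBalanced {n : ℕ} (P : Matrix (Fin n) (Fin n) ℝ) : Prop :=
  ∀ i, (∑ j, P i j) = ∑ j, P j i

/-- Total netflow imbalance `‖P𝟏 - Pᵀ𝟏‖₁`. -/
noncomputable def imb {n : ℕ} (P : Matrix (Fin n) (Fin n) ℝ) : ℝ :=
  ∑ i, |(∑ j, P i j) - ∑ j, P j i|

/-- Entrywise ℓ₁ norm of a matrix. -/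
noncomputable def l1 {n : ℕ} (P : Matrix (Fin n) (Fin n) ℝ) : ℝ :=
  ∑ i, ∑ j, |P i j|

/-- There is a directed path from `i` to `j` of length at most `d`. -/
def ConnectsWithin {n : ℕ} (E : Finset (Fin n × Fin n)) (d : ℕ) (i j : Fin n) : Prop :=
  ∃ l : List (Fin n), l.length ≤ d ∧ List.Chain (fun a b => (a, b) ∈ E) i l ∧
    (i :: l).getLast (List.cons_ne_nil _ _) = j

/-- A directed walk from `s` to `v` along edges of `E`, recorded by its
list of vertices after `s`. -/
def IsWalkFrom {n : ℕ} (E : Finset (Fin n × Fin n)) (s v : Fin n) (l : List (Fin n)) : Prop :=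
  List.Chain (fun a b => (a, b) ∈ E) s l ∧ (s :: l).getLast (List.cons_ne_nil _ _) = v

/-- Weight of a walk. -/
noncomputable def walkWeight {n : ℕ} (w : Fin n × Fin n → ℝ) (s : Fin n) (l : List (Fin n)) : ℝ :=
  (((s :: l).zip l).map w).sum

section Helpers

variable {n : ℕ} {E : Finset (Fin n × Fin n)} {w : Fin n × Fin n → ℝ}

lemma walkWeight_nil (w : Fin n × Fin n → ℝ) (s : Fin n) : walkWeight w s [] = 0 := by
  simp [walkWeight]

lemma walkWeight_cons (w : Fin n × Fin n → ℝ) (s a : Fin n) (l : List (Fin n)) :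
    walkWeight w s (a :: l) = w (s, a) + walkWeight w a l := by
  simp [walkWeight, List.zip_cons_cons]

lemma isWalkFrom_nil {s v : Fin n} : IsWalkFrom E s v [] ↔ s = v := by
  simp [IsWalkFrom, List.Chain.nil]

lemma isWalkFrom_cons {s v a : Fin n} {l : List (Fin n)} :
    IsWalkFrom E s v (a :: l) ↔ (s, a) ∈ E ∧ IsWalkFrom E a v l := by
  simp only [IsWalkFrom, List.Chain, List.isChain_cons_cons]
  rw [List.getLast_cons (List.cons_ne_nil _ _)]
  tauto

lemma walkWeight_split (w : Fin n × Fin n → ℝ) (s x : Fin n) (l₁ l₂ : List (Fin n)) :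
    walkWeight w s (l₁ ++ x :: l₂) = walkWeight w s (l₁ ++ [x]) + walkWeight w x l₂ := by
  induction l₁ generalizing s with
  | nil => simp [walkWeight_cons, walkWeight_nil]
  | cons a t ih => simp only [List.cons_append, walkWeight_cons, ih]; ring

lemma isWalkFrom_split {s v x : Fin n} {l₁ l₂ : List (Fin n)} :
    IsWalkFrom E s v (l₁ ++ x :: l₂) ↔ IsWalkFrom E s x (l₁ ++ [x]) ∧ IsWalkFrom E x v l₂ := by
  induction l₁ generalizing s with
  | nil => simp [isWalkFrom_cons, isWalkFrom_nil]
  | cons a t ih => simp only [List.cons_append, isWalkFrom_cons, ih]; tauto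

lemma isWalkFrom_append {s x v : Fin n} {l₁ l₂ : List (Fin n)}
    (h₁ : IsWalkFrom E s x l₁) (h₂ : IsWalkFrom E x v l₂) : IsWalkFrom E s v (l₁ ++ l₂) := by
  induction l₁ generalizing s with
  | nil => rw [isWalkFrom_nil] at h₁; simpa [h₁] using h₂
  | cons a t ih =>
      rw [isWalkFrom_cons] at h₁; rw [List.cons_append, isWalkFrom_cons]
      exact ⟨h₁.1, ih h₁.2⟩

lemma walkWeight_append (w : Fin n × Fin n → ℝ) {s x : Fin n} {l₁ : List (Fin n)}
    (h₁ : IsWalkFrom E s x l₁) (l₂ : List (Fin n)) :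
    walkWeight w s (l₁ ++ l₂) = walkWeight w s l₁ + walkWeight w x l₂ := by
  induction l₁ generalizing s with
  | nil => rw [isWalkFrom_nil] at h₁; simp [h₁, walkWeight_nil]
  | cons a t ih =>
      rw [isWalkFrom_cons] at h₁
      simp only [List.cons_append, walkWeight_cons, ih h₁.2]; ring

lemma isWalkFrom_pairs {s v : Fin n} {l : List (Fin n)} (h : IsWalkFrom E s v l) :
    ∀ p ∈ (s :: l).zip l, p ∈ E := by
  induction l generalizing s with
  | nil => simp
  | cons a t ih =>
      rw [isWalkFrom_cons] at h
      intro p hp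
      rw [List.zip_cons_cons, List.mem_cons] at hp
      rcases hp with rfl | hp
      · exact h.1
      · exact ih h.2 p hp

lemma abs_sum_map_le {L : List (Fin n × Fin n)} {B : ℝ} (hB : ∀ p ∈ L, |w p| ≤ B) :
    |(L.map w).sum| ≤ L.length * B := by
  induction L with
  | nil => simp
  | cons p t ih =>
      have h1 : |w p| ≤ B := hB p (by simp)
      have h2 := ih (fun q hq => hB q (by simp [hq]))
      calc |(((p :: t).map w)).sum| = |w p + (t.map w).sum| := by simp
        _ ≤ |w p| + |(t.map w).sum| := abs_add_le _ _
        _ ≤ B + t.length * B := add_le_add h1 h2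
        _ = (p :: t).length * B := by simp; ring

lemma abs_walkWeight_le {s v : Fin n} {l : List (Fin n)} {B : ℝ}
    (h : IsWalkFrom E s v l) (hB : ∀ e ∈ E, |w e| ≤ B) :
    |walkWeight w s l| ≤ l.length * B := by
  have := abs_sum_map_le (w := w) (L := (s :: l).zip l)
    (fun p hp => hB p (isWalkFrom_pairs h p hp))
  rwa [List.length_zip, List.length_cons, min_eq_right (Nat.le_succ _)] at this

lemma zip_trunc {α β : Type*} : ∀ (A : List α) (C : List β) (B : List α),
    C.length ≤ A.length → (A ++ B).zip C = A.zip C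
  | _, [], _, _ => by simp
  | a :: A, c :: C, B, h => by
      simp only [List.cons_append, List.zip_cons_cons]
      rw [zip_trunc A C B (by simpa using h)]

lemma sum_map_sub (L : List (Fin n × Fin n)) (μ : ℝ) :
    (L.map (fun e => w e - μ)).sum = (L.map w).sum - μ * L.length := by
  induction L with
  | nil => simp
  | cons p t ih => simp [ih]; ring

end Helpers
section Helpers2

variable {n : ℕ} {E : Finset (Fin n × Fin n)}

lemma first_occ {α : Type*} {a : α} : ∀ {t : List α}, a ∈ t →
    ∃ Q R, t = Q ++ a :: R ∧ a ∉ Q := by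
  intro t
  induction t with
  | nil => simp
  | cons b t ih =>
      intro h
      by_cases hab : a = b
      · exact ⟨[], t, by simp [hab], by simp⟩
      · obtain ⟨Q, R, rfl, hQ⟩ := ih ((List.mem_cons.mp h).resolve_left hab)
        exact ⟨b :: Q, R, by simp, by simp [hQ, Ne.symm (fun h' => hab h'.symm)]⟩

lemma exists_first_dup {α : Type*} (m : List α) (hm : ¬m.Nodup) :
    ∃ (P : List α) (x : α) (Q R : List α),
      m = P ++ x :: (Q ++ x :: R) ∧ (P ++ x :: Q).Nodup := by
  obtain ⟨k, hk⟩ : ∃ k, m.length ≤ k := ⟨_, le_rfl⟩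
  induction k generalizing m with
  | zero =>
      rw [Nat.le_zero, List.length_eq_zero_iff] at hk
      subst hk; exact absurd List.nodup_nil hm
  | succ k ih =>
      cases m with
      | nil => exact absurd List.nodup_nil hm
      | cons a t =>
          by_cases hat : a ∈ t
          · obtain ⟨Q, R, rfl, haQ⟩ := first_occ hat
            by_cases hQ : Q.Nodup
            · exact ⟨[], a, Q, R, by simp, by simp [List.nodup_cons, hQ, haQ]⟩
            · have hm' : ¬(a :: Q).Nodup := fun h => hQ (List.nodup_cons.mp h).2
              have hlen : (a :: Q).length ≤ k := by
                simp only [List.length_cons, List.length_append] at hk ⊢; omega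
              obtain ⟨P', x, Q', R', heq, hnd⟩ := ih (a :: Q) hm' hlen
              refine ⟨P', x, Q', R' ++ a :: R, ?_, hnd⟩
              have : a :: (Q ++ a :: R) = (a :: Q) ++ (a :: R) := by simp
              rw [this, heq]; simp
          · have ht : ¬t.Nodup := fun h => hm (List.nodup_cons.mpr ⟨hat, h⟩)
            have hlen : t.length ≤ k := by simpa using hk
            obtain ⟨P', x, Q', R', heq, hnd⟩ := ih t ht hlen
            refine ⟨a :: P', x, Q', R', by simp [heq], ?_⟩
            rw [List.cons_append]
            refine List.nodup_cons.mpr ⟨?_, hnd⟩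
            intro hmem
            apply hat
            rw [heq]
            simp only [List.mem_append, List.mem_cons] at hmem ⊢
            tauto

lemma closed_nonneg_aux {W : Fin n × Fin n → ℝ}
    (hcyc0 : ∀ c, IsCycle E c → 0 ≤ ((c.zip (c.rotate 1)).map W).sum) {x : Fin n}
    {Q : List (Fin n)} (hnd : (x :: Q).Nodup) (hw : IsWalkFrom E x x (Q ++ [x])) :
    0 ≤ walkWeight W x (Q ++ [x]) := by
  have hrot : (x :: Q).rotate 1 = Q ++ [x] := by simp [List.rotate_cons_succ]
  have hzip : ((x :: Q) ++ [x]).zip (Q ++ [x]) = (x :: Q).zip (Q ++ [x]) :=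
    zip_trunc _ _ _ (by simp)
  have hfull : (x :: (Q ++ [x])) = (x :: Q) ++ [x] := by simp
  have hc : IsCycle E (x :: Q) := by
    refine ⟨by simp, hnd, ?_⟩
    intro p hp
    apply isWalkFrom_pairs hw
    rw [hfull, hzip]
    rwa [hrot] at hp
  have h0 := hcyc0 _ hc
  rw [hrot, ← hzip, ← hfull] at h0
  exact h0

lemma walk_shortcut {W : Fin n × Fin n → ℝ}
    (hcyc0 : ∀ c, IsCycle E c → 0 ≤ ((c.zip (c.rotate 1)).map W).sum) {s v : Fin n}
    (l : List (Fin n)) (hl : IsWalkFrom E s v l) :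
    ∃ l', IsWalkFrom E s v l' ∧ (s :: l').Nodup ∧ walkWeight W s l' ≤ walkWeight W s l := by
  obtain ⟨k, hk⟩ : ∃ k, l.length ≤ k := ⟨_, le_rfl⟩
  induction k generalizing l with
  | zero =>
      rw [Nat.le_zero, List.length_eq_zero_iff] at hk
      subst hk
      exact ⟨[], hl, by simp, le_rfl⟩
  | succ k ih =>
      by_cases hnd : (s :: l).Nodup
      · exact ⟨l, hl, hnd, le_rfl⟩
      · obtain ⟨P, x, Q, R, heq, hPQ⟩ := exists_first_dup _ hnd
        cases P with
        | nil =>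
            simp only [List.nil_append] at heq hPQ
            obtain ⟨rfl, rfl⟩ : s = x ∧ l = Q ++ x :: R := ⟨(List.cons.inj heq).1, (List.cons.inj heq).2⟩
            obtain ⟨hl1, hl2⟩ := isWalkFrom_split.mp hl
            have h0 : 0 ≤ walkWeight W s (Q ++ [s]) := closed_nonneg_aux hcyc0 hPQ hl1
            have hlen : R.length ≤ k := by
              simp only [List.length_append, List.length_cons] at hk; omega
            obtain ⟨l', h1, h2, h3⟩ := ih R hl2 hlen
            refine ⟨l', h1, h2, ?_⟩
            rw [walkWeight_split]
            linarith
        | cons p P₁ =>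
            obtain ⟨rfl, rfl⟩ : s = p ∧ l = P₁ ++ x :: (Q ++ x :: R) :=
              ⟨(List.cons.inj heq).1.symm ▸ rfl, by
                have := (List.cons.inj heq).2; simpa using this⟩
            obtain ⟨hl1, hl2⟩ := isWalkFrom_split.mp hl
            obtain ⟨hl3, hl4⟩ := isWalkFrom_split.mp hl2
            have hndxQ : (x :: Q).Nodup := by
              have : (x :: Q).Sublist ((s :: P₁) ++ x :: Q) := List.sublist_append_right _ _
              exact hPQ.sublist this
            have h0 : 0 ≤ walkWeight W x (Q ++ [x]) := closed_nonneg_aux hcyc0 hndxQ hl3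
            have hnew : IsWalkFrom E s v (P₁ ++ x :: R) := isWalkFrom_split.mpr ⟨hl1, hl4⟩
            have hlen : (P₁ ++ x :: R).length ≤ k := by
              simp only [List.length_append, List.length_cons] at hk ⊢; omega
            obtain ⟨l', h1, h2, h3⟩ := ih (P₁ ++ x :: R) hnew hlen
            refine ⟨l', h1, h2, ?_⟩
            rw [walkWeight_split W s x P₁ (Q ++ x :: R), walkWeight_split W x x Q R]
            rw [walkWeight_split W s x P₁ R] at h3
            linarith

lemma closed_walk_nonneg {W : Fin n × Fin n → ℝ}
    (hcyc0 : ∀ c, IsCycle E c → 0 ≤ ((c.zip (c.rotate 1)).map W).sum) {s : Fin n}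
    {l : List (Fin n)} (hl : IsWalkFrom E s s l) : 0 ≤ walkWeight W s l := by
  obtain ⟨l', h1, h2, h3⟩ := walk_shortcut hcyc0 l hl
  have hnil : l' = [] := by
    cases l' with
    | nil => rfl
    | cons a t =>
        exfalso
        have hlast : (s :: a :: t).getLast (List.cons_ne_nil _ _) = s := h1.2
        rw [List.getLast_cons (List.cons_ne_nil _ _)] at hlast
        have hmem : s ∈ a :: t := hlast ▸ List.getLast_mem _
        exact (List.nodup_cons.mp h2).1 hmem
  subst hnil
  rw [walkWeight_nil] at h3
  linarith

end Helpers2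
section Helpers3

variable {n : ℕ} {E : Finset (Fin n × Fin n)} {w : Fin n × Fin n → ℝ}

lemma cycSet_finite : {x : ℝ | ∃ c, IsCycle E c ∧ meanWeight w c = x}.Finite := by
  apply Set.Finite.subset ((List.finite_length_le (Fin n) n).image (meanWeight w))
  rintro x ⟨c, hc, rfl⟩
  exact ⟨c, by simpa using hc.2.1.length_le_card, rfl⟩

lemma mmc_mem (hcyc : ∃ c, IsCycle E c) :
    ∃ c, IsCycle E c ∧ meanWeight w c = mmc E w := by
  have hne : {x : ℝ | ∃ c, IsCycle E c ∧ meanWeight w c = x}.Nonempty := by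
    obtain ⟨c, hc⟩ := hcyc; exact ⟨_, c, hc, rfl⟩
  exact hne.csInf_mem cycSet_finite

lemma mmc_le {c : List (Fin n)} (hc : IsCycle E c) : mmc E w ≤ meanWeight w c :=
  csInf_le cycSet_finite.bddBelow ⟨c, hc, rfl⟩

lemma cyc_zip_length {c : List (Fin n)} : (c.zip (c.rotate 1)).length = c.length := by
  simp [List.length_zip, List.length_rotate]

lemma cyc_pairs_mem {c : List (Fin n)} (hc : IsCycle E c) :
    ∀ p ∈ c.zip (c.rotate 1), p ∈ E := hc.2.2

lemma cyc_sum_ge {c : List (Fin n)} (hc : IsCycle E c) :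
    mmc E w * c.length ≤ ((c.zip (c.rotate 1)).map w).sum := by
  have hlen : (0:ℝ) < c.length := by
    exact_mod_cast List.length_pos_iff.mpr hc.1
  have h := mmc_le (w := w) hc
  rw [meanWeight, le_div_iff₀ hlen] at h
  exact h

lemma cyc_reduced_nonneg {c : List (Fin n)} (hc : IsCycle E c) :
    0 ≤ ((c.zip (c.rotate 1)).map (fun e => w e - mmc E w)).sum := by
  rw [sum_map_sub, cyc_zip_length]
  have := cyc_sum_ge (w := w) hc
  linarith

lemma abs_mean_le {c : List (Fin n)} (hc : IsCycle E c) {wmax : ℝ}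
    (hw : ∀ e ∈ E, |w e| ≤ wmax) : |meanWeight w c| ≤ wmax := by
  have hlen : (0:ℝ) < c.length := by exact_mod_cast List.length_pos_iff.mpr hc.1
  have habs := abs_sum_map_le (w := w) (L := c.zip (c.rotate 1))
    (fun p hp => hw p (hc.2.2 p hp))
  rw [cyc_zip_length] at habs
  rw [meanWeight, abs_div, abs_of_pos hlen, div_le_iff₀ hlen]
  linarith

lemma abs_mmc_le (hcyc : ∃ c, IsCycle E c) {wmax : ℝ}
    (hw : ∀ e ∈ E, |w e| ≤ wmax) : |mmc E w| ≤ wmax := by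
  obtain ⟨c, hc, hm⟩ := mmc_mem (w := w) hcyc
  rw [← hm]; exact abs_mean_le hc hw

end Helpers3
section Helpers4

variable {n : ℕ} {E : Finset (Fin n × Fin n)} {w : Fin n × Fin n → ℝ}

lemma cycle_matrix {c : List (Fin n)} (hc : IsCycle E c) :
    ∃ P : Matrix (Fin n) (Fin n) ℝ, InDeltaE E P ∧ IsBalanced P ∧
      (∑ i, ∑ j, P i j * w (i, j)) = meanWeight w c := by
  classical
  set L := c.zip (c.rotate 1) with hL
  have hLlen : L.length = c.length := cyc_zip_length
  have hmapfst : L.map Prod.fst = c := List.map_fst_zip (by simp [List.length_rotate])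
  have hmapsnd : L.map Prod.snd = c.rotate 1 := List.map_snd_zip (by simp [List.length_rotate])
  have hLnd : L.Nodup := List.Nodup.of_map Prod.fst (by rw [hmapfst]; exact hc.2.1)
  have hlenpos : (0:ℝ) < (c.length : ℝ) := by exact_mod_cast List.length_pos_iff.mpr hc.1
  set len : ℝ := (c.length : ℝ) with hlen
  set P : Matrix (Fin n) (Fin n) ℝ := fun i j => if (i, j) ∈ L then 1 / len else 0 with hP
  have hsum : ∀ f : Fin n × Fin n → ℝ,
      (∑ i, ∑ j, P i j * f (i, j)) = (L.map f).sum / len := by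
    intro f
    rw [← Finset.sum_product']
    rw [Finset.univ_product_univ]
    have heach : ∀ p : Fin n × Fin n, P p.1 p.2 * f (p.1, p.2) = if p ∈ L.toFinset then f p / len else 0 := by
      intro p
      by_cases hp : p ∈ L <;> simp [hP, hp, List.mem_toFinset] <;> ring
    rw [Finset.sum_congr rfl (fun p _ => heach p)]
    rw [Finset.sum_ite_mem, Finset.univ_inter, ← Finset.sum_div, List.sum_toFinset f hLnd]
  have hrow : ∀ v, (∑ j, P v j) = ((c.map (fun a => if a = v then (1:ℝ) else 0)).sum) / len := by
    intro v
    set g : Fin n × Fin n → ℝ := fun p => if p.1 = v then (1:ℝ) else 0 with hg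
    have h1 : (∑ i, ∑ j, P i j * g (i, j)) = ∑ j, P v j := by
      have heach : ∀ i, (∑ j, P i j * g (i, j)) = if i = v then ∑ j, P i j else 0 := by
        intro i
        by_cases hi : i = v <;> simp [hg, hi]
      rw [Finset.sum_congr rfl (fun i _ => heach i), Finset.sum_ite_eq' Finset.univ v]
      simp
    rw [← h1, hsum g]
    congr 1
    rw [← hmapfst, List.map_map]
    rfl
  have hcol : ∀ v, (∑ j, P j v) = (((c.rotate 1).map (fun a => if a = v then (1:ℝ) else 0)).sum) / len := by
    intro v
    set g : Fin n × Fin n → ℝ := fun p => if p.2 = v then (1:ℝ) else 0 with hg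
    have h1 : (∑ i, ∑ j, P i j * g (i, j)) = ∑ j, P j v := by
      have heach : ∀ i, (∑ j, P i j * g (i, j)) = P i v := by
        intro i
        have h2 : ∀ j, P i j * g (i, j) = if j = v then P i v else 0 := by
          intro j; by_cases hj : j = v <;> simp [hg, hj]
        rw [Finset.sum_congr rfl (fun j _ => h2 j), Finset.sum_ite_eq' Finset.univ v]
        simp
      rw [Finset.sum_congr rfl (fun i _ => heach i)]
    rw [← h1, hsum g]
    congr 1
    rw [← hmapsnd, List.map_map]
    rfl
  have hbal : IsBalanced P := by
    intro v
    rw [hrow, hcol]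
    congr 1
    exact (((c.rotate_perm 1).map _).sum_eq).symm
  refine ⟨P, ⟨?_, ?_, ?_⟩, hbal, ?_⟩
  · intro i j
    by_cases hm : (i, j) ∈ L
    · rw [show P i j = 1 / len from if_pos hm]
      positivity
    · rw [show P i j = 0 from if_neg hm]
  · intro i j hij
    exact if_neg (fun hmem => hij (hc.2.2 _ hmem))
  · have h1 : (∑ i, ∑ j, P i j) = (∑ i, ∑ j, P i j * (fun _ : Fin n × Fin n => (1:ℝ)) (i, j)) := by
      simp
    rw [h1, hsum (fun _ => (1:ℝ))]
    have h2 : (L.map (fun _ : Fin n × Fin n => (1:ℝ))).sum = (c.length : ℝ) := by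
      simp [List.map_const', hLlen]
    rw [h2]
    field_simp
    exact hlen.symm
  · rw [hsum w, meanWeight]

end Helpers4

/-- **Exact penalty reformulation.** For a strongly connected `G` with diameter at
most `d` and weights of magnitude at most `w_max`, the optimal value of
`min_{P ∈ Δ_E} ⟨P,W⟩ + 3 d w_max ‖P𝟏 - Pᵀ𝟏‖₁` equals `μ(G)`. -/
theorem exact_penalty {n : ℕ} (E : Finset (Fin n × Fin n)) (w : Fin n × Fin n → ℝ)
    (d : ℕ) (wmax : ℝ)
    (hconn : ∀ i j : Fin n, ConnectsWithin E d i j)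
    (hcyc : ∃ c, IsCycle E c)
    (hw : ∀ e ∈ E, |w e| ≤ wmax) :
    sInf {v : ℝ | ∃ P : Matrix (Fin n) (Fin n) ℝ, InDeltaE E P ∧
        v = (∑ i, ∑ j, P i j * w (i, j)) + 3 * d * wmax * imb P} = mmc E w := by
  classical
  set μ := mmc E w with hμdef
  set A := {v : ℝ | ∃ P : Matrix (Fin n) (Fin n) ℝ, InDeltaE E P ∧
      v = (∑ i, ∑ j, P i j * w (i, j)) + 3 * d * wmax * imb P} with hA
  obtain ⟨c₀, hc₀, hmean₀⟩ := mmc_mem (w := w) hcyc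
  have hwmax : 0 ≤ wmax := by
    have hlp : 0 < (c₀.zip (c₀.rotate 1)).length := by
      rw [cyc_zip_length]; exact List.length_pos_iff.mpr hc₀.1
    obtain ⟨p, hp⟩ := List.exists_mem_of_length_pos hlp
    exact le_trans (abs_nonneg _) (hw p (hc₀.2.2 p hp))
  have hdw : (0:ℝ) ≤ 3 * d * wmax := by positivity
  obtain ⟨P₀, hP₀, hbal₀, hip₀⟩ := cycle_matrix (w := w) hc₀
  have himb₀ : imb P₀ = 0 := by
    unfold imb
    apply Finset.sum_eq_zero
    intro i _
    rw [hbal₀ i]; simp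
  have hμA : μ ∈ A := ⟨P₀, hP₀, by rw [hip₀, hmean₀, himb₀, mul_zero, add_zero]⟩
  have himbP : ∀ P : Matrix (Fin n) (Fin n) ℝ, 0 ≤ imb P :=
    fun P => Finset.sum_nonneg fun i _ => abs_nonneg _
  have hbdd : ∀ v ∈ A, -wmax ≤ v := by
    rintro v ⟨P, hP, rfl⟩
    have h1 : ∀ i j : Fin n, -wmax * P i j ≤ P i j * w (i, j) := by
      intro i j
      by_cases hij : (i, j) ∈ E
      · have hwl : -wmax ≤ w (i, j) := neg_le_of_abs_le (hw _ hij)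
        have := mul_le_mul_of_nonneg_left hwl (hP.1 i j)
        linarith [this]
      · rw [hP.2.1 i j hij]; simp
    have h2 : -wmax ≤ ∑ i, ∑ j, P i j * w (i, j) := by
      have := Finset.sum_le_sum (fun i (_ : i ∈ Finset.univ) =>
        Finset.sum_le_sum (fun j (_ : j ∈ Finset.univ) => h1 i j))
      have heq : (∑ i, ∑ j, -wmax * P i j) = -wmax := by
        simp only [← Finset.mul_sum]
        rw [hP.2.2, mul_one]
      linarith [heq ▸ this]
    have h3 : 0 ≤ 3 * (d:ℝ) * wmax * imb P := mul_nonneg hdw (himbP P)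
    linarith
  apply le_antisymm
  · exact csInf_le ⟨-wmax, fun v hv => hbdd v hv⟩ hμA
  · apply le_csInf ⟨_, hμA⟩
    rintro v ⟨P, hP, rfl⟩
    -- potentials
    set w' : Fin n × Fin n → ℝ := fun e => w e - μ with hw'
    have hcyc0 : ∀ c, IsCycle E c → 0 ≤ ((c.zip (c.rotate 1)).map w').sum := by
      intro c hc
      exact cyc_reduced_nonneg hc
    set s : Fin n := c₀.head (hc₀.1) with hs
    have hμb : |μ| ≤ wmax := abs_mmc_le hcyc hw
    have hBW : ∀ e ∈ E, |w' e| ≤ 2 * wmax := by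
      intro e he
      have h1 := hw e he
      simp only [hw']
      rw [sub_eq_add_neg]
      refine (abs_add_le _ _).trans ?_
      rw [abs_neg]
      linarith
    set B : ℝ := (d : ℝ) * (2 * wmax) with hB
    have hBnn : 0 ≤ B := by positivity
    set WS : Fin n → Set ℝ :=
      fun v => {x | ∃ l, IsWalkFrom E s v l ∧ walkWeight w' s l = x} with hWS
    have hne : ∀ v, (WS v).Nonempty := by
      intro v
      obtain ⟨l, _, hch, hlast⟩ := hconn s v
      exact ⟨_, l, ⟨hch, hlast⟩, rfl⟩
    have hwalk_le : ∀ (a b : Fin n) (l : List (Fin n)), IsWalkFrom E a b l → l.length ≤ d →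
        walkWeight w' a l ≤ B := by
      intro a b l hl hld
      have habs := abs_walkWeight_le hl hBW
      have h1 : (l.length : ℝ) * (2 * wmax) ≤ B := by
        rw [hB]
        apply mul_le_mul_of_nonneg_right _ (by positivity)
        exact_mod_cast hld
      exact (le_abs_self _).trans (habs.trans h1)
    have hlb0 : ∀ v, ∀ x ∈ WS v, -B ≤ x := by
      rintro v x ⟨l, hl, rfl⟩
      obtain ⟨l₂, hl2len, hch2, hlast2⟩ := hconn v s
      have hw2 : IsWalkFrom E v s l₂ := ⟨hch2, hlast2⟩
      have h0 : 0 ≤ walkWeight w' s (l ++ l₂) :=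
        closed_walk_nonneg hcyc0 (isWalkFrom_append hl hw2)
      rw [walkWeight_append w' hl l₂] at h0
      have h2 : walkWeight w' v l₂ ≤ B := hwalk_le v s l₂ hw2 hl2len
      linarith
    have hbddW : ∀ v, BddBelow (WS v) := fun v => ⟨-B, fun x hx => hlb0 v x hx⟩
    set π : Fin n → ℝ := fun v => sInf (WS v) with hπ
    have hπub : ∀ v, π v ≤ B := by
      intro v
      obtain ⟨l, hld, hch, hlast⟩ := hconn s v
      have hl : IsWalkFrom E s v l := ⟨hch, hlast⟩
      exact (csInf_le (hbddW v) ⟨l, hl, rfl⟩).trans (hwalk_le s v l hl hld)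
    have hπlb : ∀ v, -B ≤ π v := fun v => le_csInf (hne v) (hlb0 v)
    have hπabs : ∀ v, |π v| ≤ B := fun v => abs_le.mpr ⟨hπlb v, hπub v⟩
    have htri : ∀ i j : Fin n, (i, j) ∈ E → μ + π j - π i ≤ w (i, j) := by
      intro i j hij
      have hstep : ∀ x ∈ WS i, π j - (w (i, j) - μ) ≤ x := by
        rintro x ⟨l, hl, rfl⟩
        have hwj : IsWalkFrom E i j [j] := by
          rw [isWalkFrom_cons]
          exact ⟨hij, isWalkFrom_nil.mpr rfl⟩
        have hwalkj : IsWalkFrom E s j (l ++ [j]) := isWalkFrom_append hl hwj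
        have hwt : walkWeight w' s (l ++ [j]) = walkWeight w' s l + (w (i, j) - μ) := by
          rw [walkWeight_append w' hl, walkWeight_cons, walkWeight_nil]
          simp [hw']
        have h5 : π j ≤ walkWeight w' s l + (w (i, j) - μ) := by
          rw [← hwt]
          exact csInf_le (hbddW j) ⟨l ++ [j], hwalkj, rfl⟩
        linarith
      have h6 : π j - (w (i, j) - μ) ≤ π i := le_csInf (hne i) hstep
      linarith
    -- main chain
    have hstep1 : (∑ i, ∑ j, P i j * (μ + π j - π i)) ≤ ∑ i, ∑ j, P i j * w (i, j) := by
      apply Finset.sum_le_sum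
      intro i _
      apply Finset.sum_le_sum
      intro j _
      by_cases hij : (i, j) ∈ E
      · exact mul_le_mul_of_nonneg_left (htri i j hij) (hP.1 i j)
      · rw [hP.2.1 i j hij]; simp
    have hexp : (∑ i, ∑ j, P i j * (μ + π j - π i))
        = μ + ∑ v, π v * ((∑ j, P j v) - (∑ j, P v j)) := by
      have h1 : ∀ i j : Fin n, P i j * (μ + π j - π i)
          = P i j * μ + P i j * π j - P i j * π i := by intro i j; ring
      simp only [h1]
      rw [Finset.sum_congr rfl (fun i _ => Finset.sum_sub_distrib _ _),
          Finset.sum_sub_distrib,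
          Finset.sum_congr rfl (fun i _ => Finset.sum_add_distrib),
          Finset.sum_add_distrib]
      have h2 : (∑ i, ∑ j, P i j * μ) = μ := by
        have he : ∀ i : Fin n, (∑ j, P i j * μ) = (∑ j, P i j) * μ :=
          fun i => (Finset.sum_mul _ _ _).symm
        rw [Finset.sum_congr rfl (fun i _ => he i), ← Finset.sum_mul, hP.2.2, one_mul]
      have h3 : (∑ i, ∑ j, P i j * π j) = ∑ v, (∑ i, P i v) * π v := by
        rw [Finset.sum_comm]
        exact Finset.sum_congr rfl (fun v _ => (Finset.sum_mul _ _ _).symm)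
      have h4 : (∑ i, ∑ j, P i j * π i) = ∑ v, (∑ j, P v j) * π v :=
        Finset.sum_congr rfl (fun v _ => (Finset.sum_mul _ _ _).symm)
      have h5 : (∑ v, (∑ i, P i v) * π v) - (∑ v, (∑ j, P v j) * π v)
          = ∑ v, π v * ((∑ j, P j v) - (∑ j, P v j)) := by
        rw [← Finset.sum_sub_distrib]
        apply Finset.sum_congr rfl
        intro v _
        ring
      rw [h2, h3, h4, add_sub_assoc, h5]
    have hstep3 : -(B * imb P) ≤ ∑ v, π v * ((∑ j, P j v) - (∑ j, P v j)) := by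
      have h1 : ∀ v : Fin n, -(B * |(∑ j, P v j) - (∑ j, P j v)|)
          ≤ π v * ((∑ j, P j v) - (∑ j, P v j)) := by
        intro v
        have h2 : |π v * ((∑ j, P j v) - (∑ j, P v j))| ≤ B * |(∑ j, P v j) - (∑ j, P j v)| := by
          rw [abs_mul, abs_sub_comm]
          exact mul_le_mul_of_nonneg_right (hπabs v) (abs_nonneg _)
        linarith [neg_abs_le (π v * ((∑ j, P j v) - (∑ j, P v j)))]
      have h5 := Finset.sum_le_sum (fun v (_ : v ∈ Finset.univ) => h1 v)
      have h6 : -(B * imb P) = ∑ i, -(B * |(∑ j, P i j) - (∑ j, P j i)|) := by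
        rw [imb, Finset.mul_sum]
        exact (Finset.sum_neg_distrib _).symm
      rw [h6]
      exact h5
    have himb := himbP P
    have hwimb : 0 ≤ (d:ℝ) * wmax * imb P := by positivity
    have hBimb : B * imb P = 2 * ((d:ℝ) * wmax * imb P) := by rw [hB]; ring
    have h3imb : 3 * (d:ℝ) * wmax * imb P = 3 * ((d:ℝ) * wmax * imb P) := by ring
    rw [hexp] at hstep1
    rw [h3imb]
    rw [hBimb] at hstep3
    linarith
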